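/- Suppose d = 36a² + 1 with a ≥ 1, and let n_1 = 12a²+6a, n_2 = ... = n_8 = 12a², n_9 = 12a²-6a. Suppose 1 ≤ k ≤ a and integers ε_1, ..., ε_r with 0 ≤ ε_i ≤ k for i = 1,...,9, ε_i ≥ 0 for i ≥ 10, satisfy ∑_{i=1}^r ε_i = 3k and (d+k)² - 1 = (d² - 1) + 24a² ∑_{i=1}^9 ε_i + 12a(ε_1 - ε_9) + ∑_{i=1}^r ε_i². Then ε_i = 0 for all i ≥ 10. -/

import Mathlib

/-- Key arithmetic estimate of Proposition `Prop:Halphen`: let `d = 36a² + 1` with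
`a ≥ 1`, `1 ≤ k ≤ a`, and suppose the integers `ε_1, ..., ε_r` (indexed `1, ..., r`
with `r ≥ 9`) satisfy `0 ≤ ε_i ≤ k` for `1 ≤ i ≤ 9`, `ε_i ≥ 0` for `i ≥ 10`,
`∑ ε_i = 3k` and
`(d+k)² - 1 = (d² - 1) + 24a²·∑_{i≤9} ε_i + 12a(ε_1 - ε_9) + ∑ ε_i²`.
Then `ε_i = 0` for all `i ≥ 10`. -/
theorem halphen_estimate (a k d : ℤ) (r : ℕ) (ε : ℕ → ℤ)
    (ha : 1 ≤ a) (hk1 : 1 ≤ k) (hka : k ≤ a)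
    (hd : d = 36 * a ^ 2 + 1)
    (hr : 9 ≤ r)
    (hsmall : ∀ i, 1 ≤ i → i ≤ 9 → 0 ≤ ε i ∧ ε i ≤ k)
    (hpos : ∀ i, 10 ≤ i → i ≤ r → 0 ≤ ε i)
    (hsum : ∑ i ∈ Finset.Icc 1 r, ε i = 3 * k)
    (hq : (d + k) ^ 2 - 1 =
        (d ^ 2 - 1) + 24 * a ^ 2 * (∑ i ∈ Finset.Icc 1 9, ε i)
          + 12 * a * (ε 1 - ε 9) + ∑ i ∈ Finset.Icc 1 r, (ε i) ^ 2) :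
    ∀ i, 10 ≤ i → i ≤ r → ε i = 0 := by
  have hsplit : ∀ f : ℕ → ℤ, ∑ i ∈ Finset.Icc 1 r, f i
      = (∑ i ∈ Finset.Icc 1 9, f i) + ∑ i ∈ Finset.Icc 10 r, f i := by
    intro f
    rw [show (Finset.Icc 1 r) = Finset.Ioc 0 r from (Finset.Icc_add_one_left_eq_Ioc 0 r).symm,
      show (Finset.Icc 1 9) = Finset.Ioc 0 9 from (Finset.Icc_add_one_left_eq_Ioc 0 9).symm,
      show (Finset.Icc 10 r) = Finset.Ioc 9 r from (Finset.Icc_add_one_left_eq_Ioc 9 r).symm]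
    exact (Finset.sum_Ioc_consecutive f (Nat.zero_le 9) hr).symm
  set S := ∑ i ∈ Finset.Icc 1 9, ε i with hS
  set T := ∑ i ∈ Finset.Icc 10 r, ε i with hT
  have hmem : ∀ i ∈ Finset.Icc 10 r, 0 ≤ ε i := by
    intro i hi
    rw [Finset.mem_Icc] at hi
    exact hpos i hi.1 hi.2
  have hT0 : 0 ≤ T := Finset.sum_nonneg hmem
  have hS0 : 0 ≤ S := Finset.sum_nonneg (by
    intro i hi
    rw [Finset.mem_Icc] at hi
    exact (hsmall i hi.1 hi.2).1)
  have hsum' : S + T = 3 * k := by rw [hS, hT, ← hsplit]; exact hsum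
  -- bound ∑_{i≤9} ε i ^ 2 ≤ k * S
  have hQ9 : ∑ i ∈ Finset.Icc 1 9, (ε i) ^ 2 ≤ k * S := by
    rw [hS, Finset.mul_sum]
    apply Finset.sum_le_sum
    intro i hi
    rw [Finset.mem_Icc] at hi
    obtain ⟨h0, hk'⟩ := hsmall i hi.1 hi.2
    nlinarith
  -- bound ∑_{i≥10} ε i ^ 2 ≤ T * T
  have hQT : ∑ i ∈ Finset.Icc 10 r, (ε i) ^ 2 ≤ T * T := by
    calc ∑ i ∈ Finset.Icc 10 r, (ε i) ^ 2 ≤ ∑ i ∈ Finset.Icc 10 r, T * ε i := by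
          apply Finset.sum_le_sum
          intro i hi
          have hle : ε i ≤ T := Finset.single_le_sum hmem hi
          have := hmem i hi
          nlinarith
      _ = T * T := by rw [← Finset.mul_sum]
  have hE : ε 1 - ε 9 ≤ k := by
    have h1 := hsmall 1 le_rfl (by norm_num)
    have h9 := hsmall 9 (by norm_num) le_rfl
    linarith [h1.2, h9.1]
  have hqq : 2 * k + k ^ 2 + 24 * a ^ 2 * T
      = (∑ i ∈ Finset.Icc 1 9, (ε i) ^ 2) + (∑ i ∈ Finset.Icc 10 r, (ε i) ^ 2)
        + 12 * a * (ε 1 - ε 9) := by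
    have := hq
    rw [hsplit (fun i => (ε i) ^ 2), hd] at this
    have hS3 : S = 3 * k - T := by linarith
    rw [hS3] at this
    ring_nf at this ⊢
    linarith
  have hTz : T = 0 := by
    rcases eq_or_lt_of_le hT0 with h | h
    · exact h.symm
    · exfalso
      have h1T : 1 ≤ T := h
      have hT3k : T ≤ 3 * k := by linarith
      nlinarith [sq_nonneg a, sq_nonneg (a - k), mul_le_mul_of_nonneg_left hka (le_of_lt (by positivity : (0:ℤ) < 12 * a)), mul_le_mul_of_nonneg_right hT3k hT0, mul_le_mul_of_nonneg_left h1T (by positivity : (0:ℤ) ≤ 24 * a ^ 2), mul_le_mul_of_nonneg_right hka (by linarith : (0:ℤ) ≤ k)]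
  intro i hi10 hir
  have hle : ε i ≤ T := Finset.single_le_sum hmem (Finset.mem_Icc.mpr ⟨hi10, hir⟩)
  have := hpos i hi10 hir
  omega
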